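/- Let G=(V,E) be a finite simple graph. Then the maximum of L(X) over all assignments X : V → {0,1} equals the maximum cardinality of an independent set of G. -/
import Mathlib

open Finset

/-- The edge term `X_k * X_l` as a function on unordered pairs. -/
def edgeTerm {V : Type*} (X : V → ℤ) : Sym2 V → ℤ :=
  Sym2.lift ⟨fun k l => X k * X l, fun k l => by ring⟩

/-- `L(X) = ∑_{k∈V} X_k − ∑_{{k,l}∈E} X_k X_l`. -/
def LFun {V : Type*} [Fintype V] [DecidableEq V] (G : SimpleGraph V)
    [DecidableRel G.Adj] (X : V → ℤ) : ℤ :=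
  (∑ k, X k) - ∑ e ∈ G.edgeFinset, edgeTerm X e

lemma edgeTerm_nonneg {V : Type*} {X : V → ℤ} (h : ∀ k, 0 ≤ X k) (e : Sym2 V) :
    0 ≤ edgeTerm X e := by
  induction e using Sym2.ind with
  | _ a b => exact mul_nonneg (h a) (h b)

lemma edgeTerm_mono {V : Type*} {X Y : V → ℤ} (h0 : ∀ k, 0 ≤ X k)
    (h : ∀ k, X k ≤ Y k) (hY : ∀ k, 0 ≤ Y k) (e : Sym2 V) :
    edgeTerm X e ≤ edgeTerm Y e := by
  induction e using Sym2.ind with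
  | _ a b => exact mul_le_mul (h a) (h b) (h0 b) (hY a)

lemma nonneg_of_h01 {V : Type*} {X : V → ℤ} (h01 : ∀ k, X k = 0 ∨ X k = 1) :
    ∀ k, 0 ≤ X k := fun k => by rcases h01 k with h | h <;> omega

lemma sum_eq_card {V : Type*} [Fintype V] [DecidableEq V] {X : V → ℤ}
    (h01 : ∀ k, X k = 0 ∨ X k = 1) :
    ∑ k, X k = ((univ.filter (fun k => X k = 1)).card : ℤ) := by
  rw [← Finset.sum_filter_add_sum_filter_not univ (fun k => X k = 1)]
  rw [Finset.sum_congr rfl (fun k hk => (Finset.mem_filter.mp hk).2)]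
  have h2 : ∑ k ∈ univ.filter (fun k => ¬ X k = 1), X k = 0 := by
    apply Finset.sum_eq_zero
    intro k hk
    rcases h01 k with h | h
    · exact h
    · exact absurd h (Finset.mem_filter.mp hk).2
  simp [h2]

/-- Key lemma: every 0/1 assignment is dominated by some independent set. -/
lemma key {V : Type*} [Fintype V] [DecidableEq V] (G : SimpleGraph V)
    [DecidableRel G.Adj] :
    ∀ n (X : V → ℤ), (∀ k, X k = 0 ∨ X k = 1) →
      (univ.filter (fun k => X k = 1)).card ≤ n →
      ∃ V' : Finset V, (∀ k ∈ V', ∀ l ∈ V', ¬ G.Adj k l) ∧ LFun G X ≤ V'.card := by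
  intro n
  induction n with
  | zero =>
    intro X h01 hcard
    refine ⟨∅, by simp, ?_⟩
    have hS : (univ.filter (fun k => X k = 1)).card = 0 := Nat.le_zero.mp hcard
    have hsum : ∑ k, X k = 0 := by rw [sum_eq_card h01, hS]; simp
    have hE : 0 ≤ ∑ e ∈ G.edgeFinset, edgeTerm X e :=
      Finset.sum_nonneg fun e _ => edgeTerm_nonneg (nonneg_of_h01 h01) e
    simp only [LFun, hsum, Finset.card_empty, Nat.cast_zero]
    linarith
  | succ n ih =>
    intro X h01 hcard
    set S := univ.filter (fun k => X k = 1) with hSdef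
    by_cases hind : ∀ k ∈ S, ∀ l ∈ S, ¬ G.Adj k l
    · refine ⟨S, hind, ?_⟩
      have hE : 0 ≤ ∑ e ∈ G.edgeFinset, edgeTerm X e :=
        Finset.sum_nonneg fun e _ => edgeTerm_nonneg (nonneg_of_h01 h01) e
      have hsum : ∑ k, X k = (S.card : ℤ) := sum_eq_card h01
      simp only [LFun, hsum]
      linarith
    · push_neg at hind
      obtain ⟨u, hu, v, hv, huv⟩ := hind
      have hXu : X u = 1 := (Finset.mem_filter.mp hu).2
      have hXv : X v = 1 := (Finset.mem_filter.mp hv).2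
      have hne : u ≠ v := G.ne_of_adj huv
      set X' := Function.update X u 0 with hX'def
      have h01' : ∀ k, X' k = 0 ∨ X' k = 1 := by
        intro k
        by_cases hk : k = u
        · left; simp [hX'def, hk]
        · rw [hX'def, Function.update_of_ne hk]; exact h01 k
      have hX'le : ∀ k, X' k ≤ X k := by
        intro k
        by_cases hk : k = u
        · subst hk; simp [hX'def, hXu]
        · rw [hX'def, Function.update_of_ne hk]
      -- support of X' is S.erase u
      have hsupp : univ.filter (fun k => X' k = 1) = S.erase u := by
        ext k
        simp only [Finset.mem_filter, Finset.mem_erase, Finset.mem_univ, true_and, hSdef]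
        constructor
        · intro hk
          by_cases h : k = u
          · subst h; simp [hX'def] at hk
          · rw [hX'def, Function.update_of_ne h] at hk; exact ⟨h, hk⟩
        · rintro ⟨h, hk⟩
          rw [hX'def, Function.update_of_ne h]; exact hk
      have hcard' : (univ.filter (fun k => X' k = 1)).card ≤ n := by
        rw [hsupp, Finset.card_erase_of_mem hu]
        omega
      obtain ⟨V', hV', hLe⟩ := ih X' h01' hcard'
      refine ⟨V', hV', le_trans ?_ hLe⟩
      -- LFun G X ≤ LFun G X'
      have hsum' : ∑ k, X k = (∑ k, X' k) + 1 := by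
        have h1 : ∑ k, X k = X u + ∑ k ∈ univ.erase u, X k :=
          (Finset.add_sum_erase univ X (Finset.mem_univ u)).symm
        have h2 : ∑ k, X' k = X' u + ∑ k ∈ univ.erase u, X' k :=
          (Finset.add_sum_erase univ X' (Finset.mem_univ u)).symm
        have h3 : ∑ k ∈ univ.erase u, X k = ∑ k ∈ univ.erase u, X' k := by
          apply Finset.sum_congr rfl
          intro k hk
          rw [hX'def, Function.update_of_ne (Finset.mem_erase.mp hk).1]
        have h4 : X' u = 0 := by simp [hX'def]
        rw [h1, h2, h3, h4, hXu]; ring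
      have he0 : s(u, v) ∈ G.edgeFinset := SimpleGraph.mem_edgeFinset.mpr huv
      have hterm : edgeTerm X s(u, v) = 1 := by
        simp [edgeTerm, hXu, hXv]
      have hterm' : edgeTerm X' s(u, v) = 0 := by
        simp [edgeTerm, hX'def]
      have hEsum : (∑ e ∈ G.edgeFinset, edgeTerm X' e) + 1 ≤
          ∑ e ∈ G.edgeFinset, edgeTerm X e := by
        rw [← Finset.add_sum_erase _ _ he0, ← Finset.add_sum_erase _ _ he0,
          hterm, hterm']
        have : ∑ e ∈ G.edgeFinset.erase s(u, v), edgeTerm X' e ≤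
            ∑ e ∈ G.edgeFinset.erase s(u, v), edgeTerm X e :=
          Finset.sum_le_sum fun e _ =>
            edgeTerm_mono (nonneg_of_h01 h01') hX'le (nonneg_of_h01 h01) e
        linarith
      simp only [LFun]
      linarith

/-- The maximum of `L(X)` over all 0/1 assignments `X` equals the maximum
cardinality of an independent set of `G`. -/
theorem max_L_eq_max_indepSet_card {V : Type*} [Fintype V] [DecidableEq V]
    (G : SimpleGraph V) [DecidableRel G.Adj] :
    ∃ m : ℕ,
      IsGreatest {n : ℕ | ∃ V' : Finset V,
        (∀ k ∈ V', ∀ l ∈ V', ¬ G.Adj k l) ∧ V'.card = n} m ∧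
      IsGreatest {z : ℤ | ∃ X : V → ℤ,
        (∀ k, X k = 0 ∨ X k = 1) ∧ LFun G X = z} (m : ℤ) := by
  classical
  set F : Finset ℕ := (univ.powerset.filter
    (fun s : Finset V => ∀ k ∈ s, ∀ l ∈ s, ¬ G.Adj k l)).image Finset.card with hF
  have hne : F.Nonempty := ⟨0, by simp [hF]⟩
  refine ⟨F.max' hne, ?_, ?_⟩
  · constructor
    · obtain ⟨s, hs, hcard⟩ := Finset.mem_image.mp (F.max'_mem hne)
      exact ⟨s, (Finset.mem_filter.mp hs).2, hcard⟩
    · rintro n ⟨V', hV', rfl⟩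
      apply F.le_max'
      exact Finset.mem_image.mpr ⟨V', Finset.mem_filter.mpr ⟨by simp, hV'⟩, rfl⟩
  · constructor
    · -- indicator of a maximum independent set achieves the value
      obtain ⟨s, hs, hcard⟩ := Finset.mem_image.mp (F.max'_mem hne)
      have hind := (Finset.mem_filter.mp hs).2
      refine ⟨fun k => if k ∈ s then 1 else 0, fun k => by dsimp only; split <;> simp, ?_⟩
      have hsum : ∑ k, (if k ∈ s then (1:ℤ) else 0) = (s.card : ℤ) := by simp
      have hE : ∑ e ∈ G.edgeFinset,
          edgeTerm (fun k => if k ∈ s then (1:ℤ) else 0) e = 0 := by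
        apply Finset.sum_eq_zero
        intro e he
        induction e using Sym2.ind with
        | _ a b =>
          have hadj : G.Adj a b := SimpleGraph.mem_edgeFinset.mp he
          have : a ∉ s ∨ b ∉ s := by
            by_contra h
            push_neg at h
            exact hind a h.1 b h.2 hadj
          rcases this with h | h <;> simp [edgeTerm, h]
      simp only [LFun, hsum, hE, sub_zero, hcard]
    · rintro z ⟨X, h01, rfl⟩
      obtain ⟨V', hV', hLe⟩ := key G (univ.filter (fun k => X k = 1)).card X h01 le_rfl
      refine le_trans hLe ?_
      have : V'.card ≤ F.max' hne := by
        apply F.le_max'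
        exact Finset.mem_image.mpr ⟨V', Finset.mem_filter.mpr ⟨by simp, hV'⟩, rfl⟩
      exact_mod_cast this
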